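/- Let m_t solve the mean-field Lindblad equation dm_t/dt = −i[H̃ + A^{m_t}, m_t] + L m_t L† − (1/2){L†L, m_t} on [0,T] with m_0 positive definite. Then for all t ∈ [0,T], m_t is positive definite and its smallest eigenvalue satisfies λ_min(m_t) ≥ λ_min(m_0)·e^{−‖L‖² t}. -/

import Mathlib

open Matrix Kronecker
open scoped ComplexOrder

/-- Partial trace over the second tensor factor, `tr₂(A ⊗ B) = tr(B)·A`. -/
noncomputable def ptrace2 {n : ℕ} (M : Matrix (Fin n × Fin n) (Fin n × Fin n) ℂ) :
    Matrix (Fin n) (Fin n) ℂ :=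
  Matrix.of fun i j => ∑ k : Fin n, M (i, k) (j, k)

/-- The mean-field interaction `A^σ = tr₂((1⊗σ)A)`. -/
noncomputable def meanField {n : ℕ} (A : Matrix (Fin n × Fin n) (Fin n × Fin n) ℂ)
    (σ : Matrix (Fin n) (Fin n) ℂ) : Matrix (Fin n) (Fin n) ℂ :=
  ptrace2 (((1 : Matrix (Fin n) (Fin n) ℂ) ⊗ₖ σ) * A)

/-- Right-hand side of the mean-field Lindblad equation
`−i[H̃ + A^m, m] + L m L† − (1/2){L†L, m}`. -/
noncomputable def lindRHS {n : ℕ} (H L : Matrix (Fin n) (Fin n) ℂ)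
    (A : Matrix (Fin n × Fin n) (Fin n × Fin n) ℂ)
    (m : Matrix (Fin n) (Fin n) ℂ) : Matrix (Fin n) (Fin n) ℂ :=
  (-Complex.I) • ((H + meanField A m) * m - m * (H + meanField A m))
    + L * m * Lᴴ - (1 / 2 : ℂ) • (Lᴴ * L * m + m * (Lᴴ * L))

/-- The smallest eigenvalue of a Hermitian matrix (junk value `0` otherwise). -/
noncomputable def lamMin {n : ℕ} (M : Matrix (Fin n) (Fin n) ℂ) : ℝ :=
  if h : M.IsHermitian then ⨅ i, h.eigenvalues i else 0

/-- The operator norm (2→2 norm) of a matrix. -/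
noncomputable def opNorm {m : Type*} [Fintype m] [DecidableEq m] (M : Matrix m m ℂ) : ℝ :=
  ‖Matrix.toEuclideanCLM (𝕜 := ℂ) M‖


open scoped InnerProductSpace

section AuxLemmas
variable {n : ℕ}

noncomputable def Phi {n : ℕ} (M : Matrix (Fin n) (Fin n) ℂ) :
    EuclideanSpace ℂ (Fin n) →L[ℂ] EuclideanSpace ℂ (Fin n) :=
  Matrix.toEuclideanCLM (𝕜 := ℂ) M

lemma phi_eigen (M : Matrix (Fin n) (Fin n) ℂ) (hM : M.IsHermitian) (j : Fin n) :
    Phi M (hM.eigenvectorBasis j) = (hM.eigenvalues j : ℂ) • hM.eigenvectorBasis j := by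
  have h := hM.mulVec_eigenvectorBasis j
  ext i
  have := congrFun h i
  simpa [Phi, Matrix.ofLp_toEuclideanCLM, mulVec] using this

lemma inner_phi_self (M : Matrix (Fin n) (Fin n) ℂ) (hM : M.IsHermitian)
    (x : EuclideanSpace ℂ (Fin n)) :
    (⟪x, Phi M x⟫_ℂ).re = ∑ j, hM.eigenvalues j * ‖⟪hM.eigenvectorBasis j, x⟫_ℂ‖ ^ 2 := by
  set b := hM.eigenvectorBasis
  have hx : x = ∑ j, ⟪b j, x⟫_ℂ • b j := (b.sum_repr' x).symm
  calc (⟪x, Phi M x⟫_ℂ).re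
      = (⟪x, Phi M (∑ j, ⟪b j, x⟫_ℂ • b j)⟫_ℂ).re := by rw [← hx]
    _ = (∑ j, ⟪b j, x⟫_ℂ * (hM.eigenvalues j : ℂ) * ⟪x, b j⟫_ℂ).re := by
        rw [map_sum]
        rw [inner_sum]
        congr 1
        refine Finset.sum_congr rfl fun j _ => ?_
        rw [(Phi M).map_smul, phi_eigen M hM j, inner_smul_right, inner_smul_right]
        ring
    _ = ∑ j, hM.eigenvalues j * ‖⟪b j, x⟫_ℂ‖ ^ 2 := by
        rw [Complex.re_sum]
        refine Finset.sum_congr rfl fun j _ => ?_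
        rw [← inner_conj_symm x (b j)]
        have : ⟪b j, x⟫_ℂ * (hM.eigenvalues j : ℂ) * (starRingEnd ℂ) ⟪b j, x⟫_ℂ
            = (hM.eigenvalues j : ℂ) * (⟪b j, x⟫_ℂ * (starRingEnd ℂ) ⟪b j, x⟫_ℂ) := by ring
        rw [this, Complex.mul_conj']
        norm_cast

lemma lamMin_eq (M : Matrix (Fin n) (Fin n) ℂ) (hM : M.IsHermitian) :
    lamMin M = ⨅ i, hM.eigenvalues i := dif_pos hM

lemma lamMin_le (hn : 0 < n) (M : Matrix (Fin n) (Fin n) ℂ) (hM : M.IsHermitian) (i : Fin n) :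
    lamMin M ≤ hM.eigenvalues i := by
  rw [lamMin_eq M hM]
  exact ciInf_le (Set.Finite.bddBelow (Set.finite_range _)) i

lemma exists_lamMin (hn : 0 < n) (M : Matrix (Fin n) (Fin n) ℂ) (hM : M.IsHermitian) :
    ∃ i, hM.eigenvalues i = lamMin M := by
  have : Nonempty (Fin n) := ⟨⟨0, hn⟩⟩
  obtain ⟨i, hi⟩ := Finite.exists_min hM.eigenvalues
  refine ⟨i, le_antisymm ?_ (lamMin_le hn M hM i)⟩
  rw [lamMin_eq M hM]
  exact le_ciInf hi

lemma norm_sq_repr (b : OrthonormalBasis (Fin n) ℂ (EuclideanSpace ℂ (Fin n)))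
    (x : EuclideanSpace ℂ (Fin n)) : ‖x‖ ^ 2 = ∑ j, ‖⟪b j, x⟫_ℂ‖ ^ 2 := by
  rw [← b.repr.norm_map x, EuclideanSpace.norm_eq]
  rw [Real.sq_sqrt (by positivity)]
  refine Finset.sum_congr rfl fun j _ => ?_
  rw [b.repr_apply_apply]

lemma quad_lower (hn : 0 < n) (M : Matrix (Fin n) (Fin n) ℂ) (hM : M.IsHermitian)
    (x : EuclideanSpace ℂ (Fin n)) : lamMin M * ‖x‖ ^ 2 ≤ (⟪x, Phi M x⟫_ℂ).re := by
  rw [inner_phi_self M hM x, norm_sq_repr hM.eigenvectorBasis x, Finset.mul_sum]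
  refine Finset.sum_le_sum fun j _ => ?_
  exact mul_le_mul_of_nonneg_right (lamMin_le hn M hM j) (by positivity)

lemma exists_unit_eigen (hn : 0 < n) (M : Matrix (Fin n) (Fin n) ℂ) (hM : M.IsHermitian) :
    ∃ x : EuclideanSpace ℂ (Fin n), ‖x‖ = 1 ∧ Phi M x = (lamMin M : ℂ) • x := by
  obtain ⟨i, hi⟩ := exists_lamMin hn M hM
  exact ⟨hM.eigenvectorBasis i, hM.eigenvectorBasis.orthonormal.1 i, by
    rw [phi_eigen M hM i, hi]⟩

lemma lamMin_lip (hn : 0 < n) (M N : Matrix (Fin n) (Fin n) ℂ)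
    (hM : M.IsHermitian) (hN : N.IsHermitian) :
    lamMin N ≤ lamMin M + ‖Phi (N - M)‖ := by
  obtain ⟨x, hx1, hxe⟩ := exists_unit_eigen hn M hM
  have h1 : lamMin N ≤ (⟪x, Phi N x⟫_ℂ).re := by
    have := quad_lower hn N hN x
    rwa [hx1, one_pow, mul_one] at this
  have h2 : Phi N x = Phi M x + Phi (N - M) x := by
    rw [show Phi (N - M) = Phi N - Phi M by simp [Phi, map_sub]]; simp
  have h3 : (⟪x, Phi M x⟫_ℂ).re = lamMin M := by
    have hxx : ⟪x, x⟫_ℂ = 1 := by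
      rw [inner_self_eq_norm_sq_to_K, hx1]; norm_num
    rw [hxe, inner_smul_right, hxx, mul_one, Complex.ofReal_re]
  have h4 : (⟪x, Phi (N - M) x⟫_ℂ).re ≤ ‖Phi (N - M)‖ := by
    calc (⟪x, Phi (N - M) x⟫_ℂ).re ≤ ‖⟪x, Phi (N - M) x⟫_ℂ‖ := Complex.re_le_norm _
      _ ≤ ‖x‖ * ‖Phi (N - M) x‖ := norm_inner_le_norm _ _
      _ ≤ ‖x‖ * (‖Phi (N - M)‖ * ‖x‖) :=
          mul_le_mul_of_nonneg_left ((Phi (N - M)).le_opNorm x) (norm_nonneg _)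
      _ = ‖Phi (N - M)‖ := by rw [hx1]; ring
  calc lamMin N ≤ (⟪x, Phi N x⟫_ℂ).re := h1
    _ = lamMin M + (⟪x, Phi (N - M) x⟫_ℂ).re := by rw [h2, inner_add_right, Complex.add_re, h3]
    _ ≤ lamMin M + ‖Phi (N - M)‖ := by linarith

set_option maxHeartbeats 1000000 in
open ContinuousLinearMap in
lemma key_estimate
    (Mc Kc Lc : EuclideanSpace ℂ (Fin n) →L[ℂ] EuclideanSpace ℂ (Fin n))
    (hMc : IsSelfAdjoint Mc) (hKc : IsSelfAdjoint Kc) (u : ℝ)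
    (hlow : ∀ y, u * ‖y‖ ^ 2 ≤ (⟪y, Mc y⟫_ℂ).re)
    (x : EuclideanSpace ℂ (Fin n)) (hx : ‖x‖ = 1) :
    -(‖Lc‖ ^ 2 * |u|) - (‖Lc‖ ^ 2 + 2 * ‖Kc‖) * ‖Mc x - (u : ℂ) • x‖ ≤
      (⟪x, ((-Complex.I) • (Kc * Mc - Mc * Kc) + Lc * Mc * (star Lc)
        - (1 / 2 : ℂ) • ((star Lc) * Lc * Mc + Mc * ((star Lc) * Lc))) x⟫_ℂ).re := by
  set w : EuclideanSpace ℂ (Fin n) := Mc x - (u : ℂ) • x with hw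
  have hMx : Mc x = (u : ℂ) • x + w := by rw [hw]; abel
  have hKadj : ∀ a b, ⟪Kc a, b⟫_ℂ = ⟪a, Kc b⟫_ℂ := fun a b => by
    rw [← ContinuousLinearMap.adjoint_inner_left, ← ContinuousLinearMap.star_eq_adjoint, hKc.star_eq]
  have hMadj : ∀ a b, ⟪Mc a, b⟫_ℂ = ⟪a, Mc b⟫_ℂ := fun a b => by
    rw [← ContinuousLinearMap.adjoint_inner_left, ← ContinuousLinearMap.star_eq_adjoint, hMc.star_eq]
  have hLadj : ∀ a b, ⟪(star Lc) a, b⟫_ℂ = ⟪a, Lc b⟫_ℂ := fun a b => by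
    rw [ContinuousLinearMap.star_eq_adjoint, ContinuousLinearMap.adjoint_inner_left]
  have hLadj' : ∀ a b, ⟪a, (star Lc) b⟫_ℂ = ⟪Lc a, b⟫_ℂ := fun a b => by
    rw [ContinuousLinearMap.star_eq_adjoint, ContinuousLinearMap.adjoint_inner_right]
  have hnLsx : ‖(star Lc) x‖ ^ 2 ≤ ‖Lc‖ ^ 2 := by
    have h1 : ‖(star Lc) x‖ ≤ ‖Lc‖ := by
      calc ‖(star Lc) x‖ ≤ ‖star Lc‖ * ‖x‖ := (star Lc).le_opNorm x
        _ = ‖Lc‖ := by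
            rw [ContinuousLinearMap.star_eq_adjoint, hx, mul_one]
            exact LinearIsometryEquiv.norm_map ContinuousLinearMap.adjoint Lc
    nlinarith [norm_nonneg ((star Lc) x)]
  have hnLx : ‖Lc x‖ ^ 2 ≤ ‖Lc‖ ^ 2 := by
    have h1 : ‖Lc x‖ ≤ ‖Lc‖ := by
      calc ‖Lc x‖ ≤ ‖Lc‖ * ‖x‖ := Lc.le_opNorm x
        _ = ‖Lc‖ := by rw [hx, mul_one]
    nlinarith [norm_nonneg (Lc x)]
  -- Term 1 : Hamiltonian part
  have hT1 : -(2 * ‖Kc‖ * ‖w‖) ≤ (⟪x, ((-Complex.I) • (Kc * Mc - Mc * Kc)) x⟫_ℂ).re := by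
    have e1 : ⟪x, (Kc * Mc) x⟫_ℂ = (u : ℂ) * ⟪x, Kc x⟫_ℂ + ⟪x, Kc w⟫_ℂ := by
      rw [ContinuousLinearMap.mul_apply, hMx, map_add, Kc.map_smul, inner_add_right,
        inner_smul_right]
    have e2 : ⟪x, (Mc * Kc) x⟫_ℂ = (u : ℂ) * ⟪x, Kc x⟫_ℂ + (starRingEnd ℂ) ⟪x, Kc w⟫_ℂ := by
      rw [ContinuousLinearMap.mul_apply, ← hMadj x (Kc x), hMx, inner_add_left,
        inner_smul_left, Complex.conj_ofReal, ← hKadj w x, ← inner_conj_symm x (Kc w), hKadj,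
        Complex.conj_conj]
    set z := ⟪x, Kc w⟫_ℂ with hz
    have e3 : ⟪x, ((-Complex.I) • (Kc * Mc - Mc * Kc)) x⟫_ℂ
        = (-Complex.I) * (z - (starRingEnd ℂ) z) := by
      rw [ContinuousLinearMap.smul_apply, inner_smul_right, ContinuousLinearMap.sub_apply,
        inner_sub_right, e1, e2]
      ring
    have e4 : ((-Complex.I) * (z - (starRingEnd ℂ) z)).re = 2 * z.im := by
      simp [Complex.ext_iff, Complex.sub_re, Complex.conj_re, Complex.conj_im]
      ring
    have e5 : |z.im| ≤ ‖Kc‖ * ‖w‖ := by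
      calc |z.im| ≤ ‖z‖ := Complex.abs_im_le_norm z
        _ ≤ ‖x‖ * ‖Kc w‖ := norm_inner_le_norm _ _
        _ ≤ ‖Kc‖ * ‖w‖ := by rw [hx, one_mul]; exact Kc.le_opNorm w
    rw [e3, e4]
    have := (abs_le.mp e5).1
    linarith
  -- Term 2 : L m L†
  have hT2 : u * ‖(star Lc) x‖ ^ 2 ≤ (⟪x, (Lc * Mc * (star Lc)) x⟫_ℂ).re := by
    have e1 : ⟪x, (Lc * Mc * (star Lc)) x⟫_ℂ = ⟪(star Lc) x, Mc ((star Lc) x)⟫_ℂ := by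
      rw [ContinuousLinearMap.mul_apply, ContinuousLinearMap.mul_apply, ← hLadj]
    rw [e1]
    exact hlow _
  -- Term 3 : anticommutator
  have hT3 : (⟪x, ((star Lc) * Lc * Mc + Mc * ((star Lc) * Lc)) x⟫_ℂ).re
      ≤ 2 * (u * ‖Lc x‖ ^ 2) + 2 * (‖Lc‖ ^ 2 * ‖w‖) := by
    have hLL : ⟪Lc x, Lc x⟫_ℂ = ((‖Lc x‖ ^ 2 : ℝ) : ℂ) := by
      rw [inner_self_eq_norm_sq_to_K]; norm_cast
    have e1 : ⟪x, ((star Lc) * Lc * Mc) x⟫_ℂ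
        = (u : ℂ) * ((‖Lc x‖ ^ 2 : ℝ) : ℂ) + ⟪Lc x, Lc w⟫_ℂ := by
      rw [ContinuousLinearMap.mul_apply, ContinuousLinearMap.mul_apply, hLadj' x, hMx,
        map_add, Lc.map_smul, inner_add_right, inner_smul_right, hLL]
    have e2 : ⟪x, (Mc * ((star Lc) * Lc)) x⟫_ℂ
        = (u : ℂ) * ((‖Lc x‖ ^ 2 : ℝ) : ℂ) + (starRingEnd ℂ) ⟪Lc x, Lc w⟫_ℂ := by
      rw [ContinuousLinearMap.mul_apply, ContinuousLinearMap.mul_apply,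
        ← hMadj x ((star Lc) (Lc x)), hMx, inner_add_left, inner_smul_left,
        Complex.conj_ofReal, hLadj' x (Lc x), hLL, hLadj' w (Lc x),
        ← inner_conj_symm (Lc w) (Lc x)]
    set a := ⟪Lc x, Lc w⟫_ℂ with ha
    have e3 : |a.re| ≤ ‖Lc‖ ^ 2 * ‖w‖ := by
      calc |a.re| ≤ ‖a‖ := Complex.abs_re_le_norm a
        _ ≤ ‖Lc x‖ * ‖Lc w‖ := norm_inner_le_norm _ _
        _ ≤ (‖Lc‖ * ‖x‖) * (‖Lc‖ * ‖w‖) :=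
            mul_le_mul (Lc.le_opNorm x) (Lc.le_opNorm w) (norm_nonneg _)
              (by positivity)
        _ = ‖Lc‖ ^ 2 * ‖w‖ := by rw [hx]; ring
    rw [ContinuousLinearMap.add_apply, inner_add_right, Complex.add_re, e1, e2]
    have := (abs_le.mp e3).2
    simp only [Complex.add_re, Complex.mul_re, Complex.ofReal_re, Complex.ofReal_im,
      Complex.conj_re]
    ring_nf
    nlinarith [this]
  -- combining
  have hS : -(|u| * ‖Lc‖ ^ 2) ≤ u * ‖(star Lc) x‖ ^ 2 - u * ‖Lc x‖ ^ 2 := by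
    rcases le_or_gt 0 u with hu | hu
    · rw [abs_of_nonneg hu]
      nlinarith [norm_nonneg ((star Lc) x)]
    · rw [abs_of_neg hu]
      nlinarith [norm_nonneg (Lc x)]
  have expand : (⟪x, ((-Complex.I) • (Kc * Mc - Mc * Kc) + Lc * Mc * (star Lc)
        - (1 / 2 : ℂ) • ((star Lc) * Lc * Mc + Mc * ((star Lc) * Lc))) x⟫_ℂ).re
      = (⟪x, ((-Complex.I) • (Kc * Mc - Mc * Kc)) x⟫_ℂ).re
        + (⟪x, (Lc * Mc * (star Lc)) x⟫_ℂ).re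
        - (1 / 2 : ℝ) * (⟪x, ((star Lc) * Lc * Mc + Mc * ((star Lc) * Lc)) x⟫_ℂ).re := by
    rw [ContinuousLinearMap.sub_apply, ContinuousLinearMap.add_apply, inner_sub_right,
      inner_add_right, ContinuousLinearMap.smul_apply, inner_smul_right,
      ContinuousLinearMap.smul_apply, inner_smul_right]
    set ζ := ⟪x, ((star Lc) * Lc * Mc + Mc * ((star Lc) * Lc)) x⟫_ℂ with hζ
    have h12 : ((1 / 2 : ℂ) * ζ).re = (1 / 2 : ℝ) * ζ.re := by
      rw [Complex.mul_re]
      norm_num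
    rw [Complex.sub_re, Complex.add_re, h12]
  rw [expand]
  have hnw : 0 ≤ ‖w‖ := norm_nonneg w
  nlinarith [hT1, hT2, hT3, hS]

lemma meanField_apply (A : Matrix (Fin n × Fin n) (Fin n × Fin n) ℂ)
    (σ : Matrix (Fin n) (Fin n) ℂ) (i j : Fin n) :
    meanField A σ i j = ∑ k : Fin n, ∑ q : Fin n, σ k q * A (i, q) (j, k) := by
  simp [meanField, ptrace2, Matrix.mul_apply, Fintype.sum_prod_type, Matrix.one_apply]

lemma meanField_isHermitian {A : Matrix (Fin n × Fin n) (Fin n × Fin n) ℂ}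
    {σ : Matrix (Fin n) (Fin n) ℂ} (hA : A.IsHermitian) (hσ : σ.IsHermitian) :
    (meanField A σ).IsHermitian := by
  rw [Matrix.IsHermitian, ← Matrix.ext_iff]
  intro i j
  rw [Matrix.conjTranspose_apply, meanField_apply, meanField_apply]
  simp only [star_sum, star_mul']
  rw [Finset.sum_comm]
  refine Finset.sum_congr rfl fun k _ => Finset.sum_congr rfl fun q _ => ?_
  have h1 : star (σ q k) = σ k q := by
    have := congrFun (congrFun hσ k) q
    rwa [Matrix.conjTranspose_apply] at this
  have h2 : star (A (j, k) (i, q)) = A (i, q) (j, k) := by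
    have := congrFun (congrFun hA (i, q)) (j, k)
    rwa [Matrix.conjTranspose_apply] at this
  rw [h1, h2]

lemma isSelfAdjoint_phi {M : Matrix (Fin n) (Fin n) ℂ} (hM : M.IsHermitian) :
    IsSelfAdjoint (Phi M) := by
  rw [_root_.IsSelfAdjoint, Phi, ← map_star (Matrix.toEuclideanCLM (𝕜 := ℂ)) M,
    Matrix.star_eq_conjTranspose, hM]

lemma phi_lindRHS (H L : Matrix (Fin n) (Fin n) ℂ)
    (A : Matrix (Fin n × Fin n) (Fin n × Fin n) ℂ) (M : Matrix (Fin n) (Fin n) ℂ) :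
    Phi (lindRHS H L A M) =
      (-Complex.I) • (Phi (H + meanField A M) * Phi M - Phi M * Phi (H + meanField A M))
        + Phi L * Phi M * star (Phi L)
        - (1 / 2 : ℂ) • (star (Phi L) * Phi L * Phi M + Phi M * (star (Phi L) * Phi L)) := by
  simp only [lindRHS, Phi, map_add, map_sub, _root_.map_smul, _root_.map_mul,
    ← Matrix.star_eq_conjTranspose, map_star]

lemma phi_apply_coord (M : Matrix (Fin n) (Fin n) ℂ) (y : EuclideanSpace ℂ (Fin n)) (i : Fin n) :
    (Phi M y) i = ∑ j, M i j * y j := by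
  have h := congrFun (Matrix.ofLp_toEuclideanCLM (𝕜 := ℂ) M y) i
  simpa [Matrix.toLin'_apply, mulVec, dotProduct, Phi] using h

lemma inner_phi_sum (M : Matrix (Fin n) (Fin n) ℂ) (x : EuclideanSpace ℂ (Fin n)) :
    ⟪x, Phi M x⟫_ℂ = ∑ i, ∑ j, (starRingEnd ℂ) (x i) * M i j * x j := by
  rw [PiLp.inner_apply]
  refine Finset.sum_congr rfl fun i _ => ?_
  rw [RCLike.inner_apply, phi_apply_coord, Finset.sum_mul]
  refine Finset.sum_congr rfl fun j _ => ?_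
  ring

lemma hasDerivAt_quad (x : EuclideanSpace ℂ (Fin n)) (m : ℝ → Matrix (Fin n) (Fin n) ℂ)
    (D : Matrix (Fin n) (Fin n) ℂ) (t : ℝ)
    (hd : ∀ i j, HasDerivAt (fun u => m u i j) (D i j) t) :
    HasDerivAt (fun s => (⟪x, Phi (m s) x⟫_ℂ).re) ((⟪x, Phi D x⟫_ℂ).re) t := by
  have h1 : HasDerivAt (fun s => ∑ i, ∑ j, (starRingEnd ℂ) (x i) * m s i j * x j)
      (∑ i, ∑ j, (starRingEnd ℂ) (x i) * D i j * x j) t := by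
    refine HasDerivAt.fun_sum fun i _ => HasDerivAt.fun_sum fun j _ => ?_
    exact ((hd i j).const_mul _).mul_const _
  have h2 := (Complex.reCLM.hasFDerivAt).comp_hasDerivAt t h1
  simp only [inner_phi_sum]
  exact h2

lemma dot_eq_inner (M : Matrix (Fin n) (Fin n) ℂ) (x : Fin n → ℂ) :
    star x ⬝ᵥ (M *ᵥ x) =
      ⟪((WithLp.equiv 2 _).symm x : EuclideanSpace ℂ (Fin n)),
        Phi M ((WithLp.equiv 2 _).symm x)⟫_ℂ := by
  rw [inner_phi_sum]
  simp [dotProduct, mulVec, Finset.mul_sum, mul_assoc, mul_comm, mul_left_comm]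

end AuxLemmas
open scoped InnerProductSpace

set_option maxHeartbeats 1600000 in
/-- Faithfulness is propagated by the mean-field Lindblad flow with an explicit lower
bound on the smallest eigenvalue: `λ_min(m_t) ≥ λ_min(m_0)·e^{−‖L‖² t}`. -/
theorem lindblad_faithfulness {n : ℕ} (hn : 0 < n) (T : ℝ) (hT : 0 ≤ T)
    (H L : Matrix (Fin n) (Fin n) ℂ) (hH : H.IsHermitian)
    (A : Matrix (Fin n × Fin n) (Fin n × Fin n) ℂ) (hA : A.IsHermitian)
    (m : ℝ → Matrix (Fin n) (Fin n) ℂ)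
    (hderiv : ∀ t ∈ Set.Icc 0 T, ∀ i j : Fin n,
      HasDerivAt (fun u => m u i j) ((lindRHS H L A (m t)) i j) t)
    (hherm : ∀ t ∈ Set.Icc 0 T, (m t).IsHermitian)
    (htrace : ∀ t ∈ Set.Icc 0 T, (m t).trace = 1)
    (h0 : (m 0).PosDef) :
    ∀ t ∈ Set.Icc 0 T, (m t).PosDef ∧
      lamMin (m t) ≥ lamMin (m 0) * Real.exp (-(opNorm L) ^ 2 * t) := by
  have hnE : Nonempty (Fin n) := ⟨⟨0, hn⟩⟩
  set c : ℝ := opNorm L ^ 2 with hc_def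
  have hc : 0 ≤ c := sq_nonneg _
  have hcPhi : c = ‖Phi L‖ ^ 2 := rfl
  have h0m : (0:ℝ) ∈ Set.Icc 0 T := ⟨le_refl 0, hT⟩
  have hu0 : 0 < lamMin (m 0) := by
    obtain ⟨i, hi⟩ := exists_lamMin hn (m 0) h0.1
    have h2 := h0.eigenvalues_pos i
    rwa [hi] at h2
  set u : ℝ → ℝ := fun s => lamMin (m s) with hu_def
  set g : ℝ → ℝ := fun s => u 0 * Real.exp (-c * s) with hg_def
  have hgpos : ∀ s, 0 < g s := fun s => mul_pos hu0 (Real.exp_pos _)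
  have hg0 : g 0 = u 0 := by simp [hg_def]
  have hgderiv : ∀ s, HasDerivAt g (-c * g s) s := by
    intro s
    have h1 : HasDerivAt (fun y : ℝ => -c * y) (-c) s := by
      simpa using (hasDerivAt_id s).const_mul (-c)
    have h2 := (h1.exp).const_mul (u 0)
    refine h2.congr_deriv ?_
    simp [hg_def]
    ring
  -- continuity of m and related quantities
  have hmC : ∀ t ∈ Set.Icc 0 T, ContinuousAt m t := fun t ht =>
    continuousAt_pi.2 fun i => continuousAt_pi.2 fun j => (hderiv t ht i j).continuousAt
  have hPhiCont : Continuous (Phi (n := n)) := by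
    let φL : Matrix (Fin n) (Fin n) ℂ →ₗ[ℂ]
        (EuclideanSpace ℂ (Fin n) →L[ℂ] EuclideanSpace ℂ (Fin n)) :=
      { toFun := Phi, map_add' := fun a b => map_add _ a b,
        map_smul' := fun r M => by
          simpa [Phi] using map_smul (Matrix.toEuclideanCLM (𝕜 := ℂ)) r M }
    exact φL.continuous_of_finiteDimensional
  have hmfC : ∀ t ∈ Set.Icc 0 T, ContinuousAt (fun s => meanField A (m s)) t := by
    intro t ht
    refine continuousAt_pi.2 fun i => continuousAt_pi.2 fun j => ?_
    simp only [meanField_apply]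
    exact tendsto_finset_sum _ fun k _ => tendsto_finset_sum _ fun q _ =>
      ((hderiv t ht k q).continuousAt.mul continuousAt_const)
  have hKcC : ∀ t ∈ Set.Icc 0 T,
      ContinuousAt (fun s => ‖Phi (H + meanField A (m s))‖) t := fun t ht =>
    ((hPhiCont.continuousAt.comp (continuousAt_const.add (hmfC t ht)))).norm
  have hKherm : ∀ t ∈ Set.Icc 0 T, (H + meanField A (m t)).IsHermitian := fun t ht =>
    hH.add (meanField_isHermitian hA (hherm t ht))
  -- modulus of continuity of u
  have huC : ∀ t ∈ Set.Icc 0 T, ∀ ε > 0, ∀ᶠ s in nhds t, s ∈ Set.Icc 0 T → |u s - u t| < ε := by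
    intro t ht ε hε
    have h1 : ContinuousAt (fun s => ‖Phi (m s) - Phi (m t)‖) t :=
      ((hPhiCont.continuousAt.comp (hmC t ht)).sub continuousAt_const).norm
    have h0' : ‖Phi (m t) - Phi (m t)‖ < ε := by simpa using hε
    have h2 : ∀ᶠ s in nhds t, ‖Phi (m s) - Phi (m t)‖ < ε := h1 (Iio_mem_nhds h0')
    filter_upwards [h2] with s hs hsIcc
    have hms : Phi (m s - m t) = Phi (m s) - Phi (m t) := map_sub _ _ _
    have hmt : Phi (m t - m s) = Phi (m t) - Phi (m s) := map_sub _ _ _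
    have hle1 := lamMin_lip hn (m t) (m s) (hherm t ht) (hherm s hsIcc)
    have hle2 := lamMin_lip hn (m s) (m t) (hherm s hsIcc) (hherm t ht)
    rw [hms] at hle1
    rw [hmt, norm_sub_rev] at hle2
    rw [abs_sub_lt_iff]
    refine ⟨?_, ?_⟩ <;> simp only [hu_def] <;> linarith
  have hucont : ContinuousOn u (Set.Icc 0 T) := by
    intro t ht
    rw [Metric.continuousWithinAt_iff]
    intro ε hε
    have h2 := huC t ht ε hε
    rw [Metric.eventually_nhds_iff] at h2
    obtain ⟨δ, hδ, hδ2⟩ := h2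
    exact ⟨δ, hδ, fun {s} hs hdist => by
      simpa [Real.dist_eq] using hδ2 hdist hs⟩
  have hgcont : Continuous g := by
    simp only [hg_def]
    exact continuous_const.mul (Real.continuous_exp.comp (continuous_const.mul continuous_id))
  set f : ℝ → ℝ := fun s => max (g s - u s) 0 with hf_def
  have hfcont : ContinuousOn f (Set.Icc 0 T) := fun x hx =>
    (((hgcont.continuousOn.sub hucont) x hx).max continuousWithinAt_const)
  -- the key derivative estimate
  have keyev : ∀ t, t ∈ Set.Ico 0 T → ∀ η, 0 < η → ∀ᶠ z in nhdsWithin t (Set.Ioi t),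
      z ∈ Set.Ioc t T → -((z - t) * (c * |u t| + η)) ≤ u z - u t := by
    intro t ht η hη
    have htT : t < T := ht.2
    have htIcc : t ∈ Set.Icc 0 T := ⟨ht.1, le_of_lt htT⟩
    set Knorm : ℝ := ‖Phi (H + meanField A (m t))‖ with hKn_def
    have hKn0 : 0 ≤ Knorm := norm_nonneg _
    set Cst : ℝ := c + 2 * (Knorm + 1) with hCst_def
    have hCst0 : 0 ≤ Cst := by positivity
    have hden : 0 < c + 4 * Cst + 1 := by positivity
    set ε' : ℝ := η / (c + 4 * Cst + 1) with hε'_def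
    have hε'pos : 0 < ε' := div_pos hη hden
    have hεeq : (c + 4 * Cst + 1) * ε' = η := by
      rw [hε'_def]
      field_simp
    have h1ev : ∀ᶠ s in nhds t, ‖Phi (m s) - Phi (m t)‖ < ε' := by
      have h1 : ContinuousAt (fun s => ‖Phi (m s) - Phi (m t)‖) t :=
        ((hPhiCont.continuousAt.comp (hmC t htIcc)).sub continuousAt_const).norm
      exact h1 (Iio_mem_nhds (by simpa using hε'pos))
    have h2ev := huC t htIcc ε' hε'pos
    have h3ev : ∀ᶠ s in nhds t, ‖Phi (H + meanField A (m s))‖ < Knorm + 1 :=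
      (hKcC t htIcc) (Iio_mem_nhds (by simp only [hKn_def]; linarith))
    rw [Metric.eventually_nhds_iff] at h1ev h2ev h3ev
    obtain ⟨δ1, hδ1, H1⟩ := h1ev
    obtain ⟨δ2, hδ2, H2⟩ := h2ev
    obtain ⟨δ3, hδ3, H3⟩ := h3ev
    set ρ : ℝ := min δ1 (min δ2 δ3) with hρ_def
    have hρ : 0 < ρ := lt_min hδ1 (lt_min hδ2 hδ3)
    have hIoo : Set.Ioo t (t + ρ) ∈ nhdsWithin t (Set.Ioi t) :=
      Ioo_mem_nhdsGT_of_mem ⟨le_refl t, by linarith⟩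
    filter_upwards [hIoo] with z hzIoo hzIoc
    have hzt : t < z := hzIoo.1
    have hzt' : 0 < z - t := sub_pos.2 hzt
    have hne : z - t ≠ 0 := ne_of_gt hzt'
    have hzIcc : z ∈ Set.Icc 0 T := ⟨le_trans ht.1 (le_of_lt hzt), hzIoc.2⟩
    have hdist : ∀ s, t ≤ s → s ≤ z → dist s t < ρ := by
      intro s h1 h2
      rw [Real.dist_eq, abs_of_nonneg (by linarith)]
      have := hzIoo.2
      linarith
    obtain ⟨x, hx1, hxe⟩ := exists_unit_eigen hn (m z) (hherm z hzIcc)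
    set q : ℝ → ℝ := fun s => (⟪x, Phi (m s) x⟫_ℂ).re with hq_def
    have hqd : ∀ s ∈ Set.Icc 0 T,
        HasDerivAt q ((⟪x, Phi (lindRHS H L A (m s)) x⟫_ℂ).re) s := fun s hs =>
      hasDerivAt_quad x m _ s (fun i j => hderiv s hs i j)
    have hsub : Set.Icc t z ⊆ Set.Icc 0 T := Set.Icc_subset_Icc ht.1 hzIcc.2
    have hcq : ContinuousOn q (Set.Icc t z) := fun s hs =>
      ((hqd s (hsub hs)).continuousAt).continuousWithinAt
    obtain ⟨s₀, hs₀, hs₀eq⟩ := exists_hasDerivAt_eq_slope q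
      (fun s => (⟪x, Phi (lindRHS H L A (m s)) x⟫_ℂ).re) hzt hcq
      (fun s hs => hqd s (hsub ⟨le_of_lt hs.1, le_of_lt hs.2⟩))
    have hs₀Icc : s₀ ∈ Set.Icc 0 T := hsub ⟨le_of_lt hs₀.1, le_of_lt hs₀.2⟩
    have hds₀ : dist s₀ t < ρ := hdist s₀ (le_of_lt hs₀.1) (le_of_lt hs₀.2)
    have hdz : dist z t < ρ := hdist z (le_of_lt hzt) (le_refl z)
    have hG1s : ‖Phi (m s₀) - Phi (m t)‖ < ε' := H1 (lt_of_lt_of_le hds₀ (min_le_left _ _))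
    have hG1z : ‖Phi (m z) - Phi (m t)‖ < ε' := H1 (lt_of_lt_of_le hdz (min_le_left _ _))
    have hG2s : |u s₀ - u t| < ε' :=
      H2 (lt_of_lt_of_le hds₀ (le_trans (min_le_right _ _) (min_le_left _ _))) hs₀Icc
    have hG2z : |u z - u t| < ε' :=
      H2 (lt_of_lt_of_le hdz (le_trans (min_le_right _ _) (min_le_left _ _))) hzIcc
    have hG3s : ‖Phi (H + meanField A (m s₀))‖ < Knorm + 1 :=
      H3 (lt_of_lt_of_le hds₀ (le_trans (min_le_right _ _) (min_le_right _ _)))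
    have hbound := key_estimate (Phi (m s₀)) (Phi (H + meanField A (m s₀))) (Phi L)
      (isSelfAdjoint_phi (hherm s₀ hs₀Icc)) (isSelfAdjoint_phi (hKherm s₀ hs₀Icc))
      (lamMin (m s₀)) (fun y => quad_lower hn (m s₀) (hherm s₀ hs₀Icc) y) x hx1
    rw [← phi_lindRHS H L A (m s₀)] at hbound
    have huz_eq : u z = lamMin (m z) := rfl
    have hus_eq : u s₀ = lamMin (m s₀) := rfl
    have hδb : ‖Phi (m s₀) x - ((lamMin (m s₀) : ℝ) : ℂ) • x‖ ≤ 4 * ε' := by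
      have e1 : Phi (m s₀) x - ((lamMin (m s₀) : ℝ) : ℂ) • x
          = (Phi (m s₀) - Phi (m z)) x
            + (((lamMin (m z) : ℝ) : ℂ) • x - ((lamMin (m s₀) : ℝ) : ℂ) • x) := by
        rw [ContinuousLinearMap.sub_apply, hxe]
        abel
      rw [e1]
      have b1 : ‖(Phi (m s₀) - Phi (m z)) x‖ ≤ 2 * ε' := by
        have e2 : Phi (m s₀) - Phi (m z) = (Phi (m s₀) - Phi (m t)) + (Phi (m t) - Phi (m z)) := by
          abel
        calc ‖(Phi (m s₀) - Phi (m z)) x‖ ≤ ‖Phi (m s₀) - Phi (m z)‖ * ‖x‖ :=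
            (Phi (m s₀) - Phi (m z)).le_opNorm x
          _ = ‖Phi (m s₀) - Phi (m z)‖ := by rw [hx1, mul_one]
          _ ≤ ‖Phi (m s₀) - Phi (m t)‖ + ‖Phi (m t) - Phi (m z)‖ := by
              rw [e2]; exact norm_add_le _ _
          _ ≤ 2 * ε' := by
              rw [norm_sub_rev (Phi (m t))]
              linarith
      have b2 : ‖((lamMin (m z) : ℝ) : ℂ) • x - ((lamMin (m s₀) : ℝ) : ℂ) • x‖ ≤ 2 * ε' := by
        rw [← sub_smul, norm_smul, hx1, mul_one]
        have e3 : ((lamMin (m z) : ℝ) : ℂ) - ((lamMin (m s₀) : ℝ) : ℂ)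
            = ((lamMin (m z) - lamMin (m s₀) : ℝ) : ℂ) := by push_cast; ring
        rw [e3, Complex.norm_real, Real.norm_eq_abs]
        have e4 : |lamMin (m z) - lamMin (m s₀)| ≤ |u z - u t| + |u s₀ - u t| := by
          rw [← huz_eq, ← hus_eq]
          calc |u z - u s₀| ≤ |u z - u t| + |u t - u s₀| := abs_sub_le _ _ _
            _ = |u z - u t| + |u s₀ - u t| := by rw [abs_sub_comm (u t)]
        linarith
      calc ‖(Phi (m s₀) - Phi (m z)) x
            + (((lamMin (m z) : ℝ) : ℂ) • x - ((lamMin (m s₀) : ℝ) : ℂ) • x)‖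
          ≤ ‖(Phi (m s₀) - Phi (m z)) x‖
            + ‖((lamMin (m z) : ℝ) : ℂ) • x - ((lamMin (m s₀) : ℝ) : ℂ) • x‖ := norm_add_le _ _
        _ ≤ 4 * ε' := by linarith
    have hus₀ : |lamMin (m s₀)| ≤ |u t| + ε' := by
      have h5 := abs_sub_abs_le_abs_sub (lamMin (m s₀)) (u t)
      have h6 : |lamMin (m s₀) - u t| < ε' := by rw [← hus_eq]; exact hG2s
      linarith
    have hKb : ‖Phi L‖ ^ 2 + 2 * ‖Phi (H + meanField A (m s₀))‖ ≤ Cst := by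
      rw [hCst_def, ← hcPhi]
      linarith
    have hq' : -(c * |u t| + η) ≤ (⟪x, Phi (lindRHS H L A (m s₀)) x⟫_ℂ).re := by
      have hδ0 : 0 ≤ ‖Phi (m s₀) x - ((lamMin (m s₀) : ℝ) : ℂ) • x‖ := norm_nonneg _
      have t1 : (‖Phi L‖ ^ 2 + 2 * ‖Phi (H + meanField A (m s₀))‖) *
          ‖Phi (m s₀) x - ((lamMin (m s₀) : ℝ) : ℂ) • x‖ ≤ Cst * (4 * ε') :=
        mul_le_mul hKb hδb hδ0 hCst0
      have t2 : ‖Phi L‖ ^ 2 * |lamMin (m s₀)| ≤ c * (|u t| + ε') := by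
        rw [← hcPhi]
        exact mul_le_mul_of_nonneg_left hus₀ hc
      have t3 : c * ε' + Cst * (4 * ε') ≤ η := by nlinarith
      linarith [hbound]
    have hqz : q z = u z := by
      simp only [hq_def]
      rw [hxe, inner_smul_right]
      have hxx : ⟪x, x⟫_ℂ = 1 := by
        rw [inner_self_eq_norm_sq_to_K, hx1]
        norm_num
      rw [hxx, mul_one, Complex.ofReal_re, huz_eq]
    have hqt : u t ≤ q t := by
      have h7 := quad_lower hn (m t) (hherm t htIcc) x
      rw [hx1, one_pow, mul_one] at h7
      exact h7
    have heq : q z - q t = (z - t) * (⟪x, Phi (lindRHS H L A (m s₀)) x⟫_ℂ).re := by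
      rw [hs₀eq]
      field_simp
    have final : -((z - t) * (c * |u t| + η)) ≤ q z - q t := by
      rw [heq]
      have h8 := mul_le_mul_of_nonneg_left hq' (le_of_lt hzt')
      nlinarith
    linarith
  -- slope estimate for Gronwall
  have hslope : ∀ t ∈ Set.Ico 0 T, ∀ r, c * f t < r →
      ∃ᶠ z in nhdsWithin t (Set.Ioi t), (z - t)⁻¹ * (f z - f t) < r := by
    intro t ht r hr
    have htT : t < T := ht.2
    have htIcc : t ∈ Set.Icc 0 T := ⟨ht.1, le_of_lt htT⟩
    have hIocmem : Set.Ioc t T ∈ nhdsWithin t (Set.Ioi t) :=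
      Ioc_mem_nhdsGT_of_mem ⟨le_refl t, htT⟩
    have hft_nonneg : 0 ≤ f t := le_max_right _ _
    have hr0 : 0 < r := lt_of_le_of_lt (by positivity) hr
    -- slope estimate for g
    have gev : ∀ η, 0 < η → ∀ᶠ z in nhdsWithin t (Set.Ioi t),
        z ∈ Set.Ioi t → g z - g t ≤ (z - t) * (-c * g t + η) := by
      intro η hη
      have h := hasDerivAt_iff_tendsto_slope.mp (hgderiv t)
      have hmono : nhdsWithin t (Set.Ioi t) ≤ nhdsWithin t {t}ᶜ :=
        nhdsWithin_mono t (fun z hz => ne_of_gt hz)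
      have h2 : ∀ᶠ z in nhdsWithin t (Set.Ioi t), slope g t z < -c * g t + η :=
        (h.mono_left hmono) (Iio_mem_nhds (by linarith))
      filter_upwards [h2] with z hz hzt
      have hzt' : 0 < z - t := sub_pos.2 hzt
      rw [slope_def_field] at hz
      calc g z - g t = ((g z - g t) / (z - t)) * (z - t) := by field_simp
        _ ≤ (-c * g t + η) * (z - t) := mul_le_mul_of_nonneg_right (le_of_lt hz) (le_of_lt hzt')
        _ = (z - t) * (-c * g t + η) := by ring
    rcases lt_or_ge (g t - u t) 0 with hneg | hpos
    · -- u t > g t strictly : f vanishes near t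
      have hft0 : f t = 0 := max_eq_right (le_of_lt hneg)
      set ε : ℝ := (u t - g t) / 3 with hε_def
      have hεpos : 0 < ε := by simp only [hε_def]; linarith
      have hgev2 : ∀ᶠ z in nhds t, |g z - g t| < ε := by
        have h1 : ContinuousAt (fun z => |g z - g t|) t :=
          ((hgcont.continuousAt.sub continuousAt_const)).abs
        have h0' : |g t - g t| < ε := by simpa using hεpos
        exact h1 (Iio_mem_nhds h0')
      have huev2 := huC t htIcc ε hεpos
      refine Filter.Eventually.frequently ?_
      filter_upwards [hgev2.filter_mono nhdsWithin_le_nhds,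
        huev2.filter_mono nhdsWithin_le_nhds, hIocmem, self_mem_nhdsWithin] with z h1 h2 hzIoc hzt
      have hzIcc : z ∈ Set.Icc 0 T := ⟨le_trans ht.1 (le_of_lt hzIoc.1), hzIoc.2⟩
      have h2' := h2 hzIcc
      have h3 : g z - u z < 0 := by
        have := abs_lt.mp h1
        have := abs_lt.mp h2'
        simp only [hε_def] at *
        linarith
      have hfz : f z = 0 := max_eq_right (le_of_lt h3)
      rw [hfz, hft0]
      simpa using hr0
    · -- u t ≤ g t
      have hft_eq : f t = g t - u t := max_eq_left hpos
      have hut_le : u t ≤ g t := by linarith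
      set B : ℝ := -c * g t + c * |u t| with hB_def
      have hBr : B < r := by
        rcases le_or_gt 0 (u t) with h1 | h1
        · rw [hB_def, abs_of_nonneg h1]
          have h2 : c * (g t - u t) = c * f t := by rw [hft_eq]
          nlinarith [mul_nonneg hc (sub_nonneg.2 hut_le)]
        · rw [hB_def, abs_of_neg h1]
          have h2 : c * (g t - u t) ≤ c * f t := by rw [hft_eq]
          have h3 : 0 ≤ c * g t := mul_nonneg hc (le_of_lt (hgpos t))
          nlinarith
      set η : ℝ := (r - B) / 4 with hη_def
      have hηpos : 0 < η := by simp only [hη_def]; linarith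
      refine Filter.Eventually.frequently ?_
      filter_upwards [keyev t ht η hηpos, gev η hηpos, hIocmem, self_mem_nhdsWithin]
        with z hkey hgz hzIoc hzt
      have hzt' : 0 < z - t := sub_pos.2 hzt
      have hkey' := hkey hzIoc
      have hgz' := hgz hzt
      have hhz : (g z - u z) - (g t - u t) ≤ (z - t) * (B + 2 * η) := by
        simp only [hB_def]
        nlinarith
      have hfz : f z - f t ≤ max ((z - t) * (B + 2 * η)) 0 := by
        have hmax1 : f z ≤ max ((g z - u z) - (g t - u t)) 0 + f t := by
          simp only [hf_def]
          have a1 : g z - u z - (g t - u t) ≤ max (g z - u z - (g t - u t)) 0 :=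
            le_max_left _ _
          have a2 : g t - u t ≤ max (g t - u t) 0 := le_max_left _ _
          have a3 : (0:ℝ) ≤ max (g z - u z - (g t - u t)) 0 := le_max_right _ _
          have a4 : (0:ℝ) ≤ max (g t - u t) 0 := le_max_right _ _
          exact max_le (by linarith) (by linarith)
        have hmax2 : max ((g z - u z) - (g t - u t)) 0 ≤ max ((z - t) * (B + 2 * η)) 0 :=
          max_le_max hhz (le_refl 0)
        linarith
      have hmax3 : max ((z - t) * (B + 2 * η)) 0 = (z - t) * max (B + 2 * η) 0 := by
        rcases le_total (B + 2 * η) 0 with h1 | h1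
        · rw [max_eq_right h1, max_eq_right
            (mul_nonpos_iff.2 (Or.inl ⟨le_of_lt hzt', h1⟩)), mul_zero]
        · rw [max_eq_left h1, max_eq_left (mul_nonneg (le_of_lt hzt') h1)]
      have hmaxr : max (B + 2 * η) 0 < r := by
        refine max_lt ?_ hr0
        simp only [hη_def]
        linarith
      calc (z - t)⁻¹ * (f z - f t) ≤ (z - t)⁻¹ * ((z - t) * max (B + 2 * η) 0) := by
            refine mul_le_mul_of_nonneg_left ?_ (inv_nonneg.2 (le_of_lt hzt'))
            rw [← hmax3]
            exact hfz
        _ = max (B + 2 * η) 0 := by field_simp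
        _ < r := hmaxr
  have main := le_gronwallBound_of_liminf_deriv_right_le (f' := fun s => c * f s)
    (δ := 0) (K := c) (ε := 0) (a := 0) (b := T)
    hfcont hslope (by simp [hf_def, hg0]) (fun x _ => by simp)
  intro t ht
  have hft : f t ≤ 0 := by
    have h2 := main t ht
    rwa [gronwallBound_ε0_δ0] at h2
  have hgu : g t ≤ u t := by
    have h3 : g t - u t ≤ f t := le_max_left _ _
    linarith
  have hupos : 0 < u t := lt_of_lt_of_le (hgpos t) hgu
  constructor
  · refine Matrix.PosDef.of_dotProduct_mulVec_pos (hherm t ht) fun x hx => ?_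
    set y : EuclideanSpace ℂ (Fin n) := (WithLp.equiv 2 _).symm x with hy_def
    have hdot := dot_eq_inner (m t) x
    have hyne : y ≠ 0 := by
      simpa [hy_def] using hx
    have hquad := quad_lower hn (m t) (hherm t ht) y
    have hynorm : 0 < ‖y‖ := norm_pos_iff.2 hyne
    have hself : (starRingEnd ℂ) (⟪y, Phi (m t) y⟫_ℂ) = ⟪y, Phi (m t) y⟫_ℂ := by
      rw [inner_conj_symm]
      have hadj := isSelfAdjoint_phi (hherm t ht)
      rw [← ContinuousLinearMap.adjoint_inner_left, ← ContinuousLinearMap.star_eq_adjoint,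
        hadj.star_eq]
    rw [hdot, Complex.lt_def]
    constructor
    · have h5 : 0 < u t * ‖y‖ ^ 2 := by positivity
      simpa [hy_def] using lt_of_lt_of_le h5 hquad
    · simp only [Complex.zero_im]
      exact (Complex.conj_eq_iff_im.mp hself).symm
  · show lamMin (m 0) * Real.exp (-opNorm L ^ 2 * t) ≤ lamMin (m t)
    exact hgu
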